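/- For each m ∈ {2,3}, the five points c^j • R_m (j = 0,…,4) of the quadric Q are in general position, namely: (a) any four of the five vectors c⁰ • R_m, …, c⁴ • R_m are linearly independent over ℂ (no four of the five points lie on a plane in ℙ³ = {∑ x_i = 0}); and (b) for j ≠ j', the ℂ-span of c^j • R_m and c^{j'} • R_m is not contained in the quadric cone {v : ∑ i, (v i)² = 0} (no two of the five points lie on a line contained in Q). -/

import Mathlib

/-- The 5-cycle `(0 1 2 3 4)` on `Fin 5`, sending `i` to `i + 1 (mod 5)`. -/
def c : Equiv.Perm (Fin 5) := finRotate 5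

/-- The linear action of a permutation `g` on vectors: `(g • v) i = v (g⁻¹ i)`. -/
def permSMul (g : Equiv.Perm (Fin 5)) (v : Fin 5 → ℂ) : Fin 5 → ℂ := fun i => v (g⁻¹ i)

def R₂ : Fin 5 → ℂ := ![0, -Complex.I, -1, 1, Complex.I]
def R₃ : Fin 5 → ℂ := ![0, Complex.I, -1, 1, -Complex.I]

lemma sa1 : Fin.succAbove (1 : Fin 4) 2 = 3 := by decide
lemma sa2 : Fin.succAbove (2 : Fin 4) 2 = 3 := by decide
lemma cs2 : Fin.castSucc (2 : Fin 3) = (2 : Fin 4) := by decide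
lemma sa3 : Fin.succAbove (3 : Fin 4) 2 = 2 := by decide

lemma li_of_det {ι : Type*} [Fintype ι] (v : ι → Fin 5 → ℂ) (e : Fin 4 ≃ ι) (f : Fin 4 → Fin 5)
    (hdet : (Matrix.of fun i k => v (e i) (f k)).det ≠ 0) : LinearIndependent ℂ v := by
  rw [← linearIndependent_equiv e]
  have h2 : LinearIndependent ℂ (fun i => (Matrix.of fun i k => v (e i) (f k)) i) :=
    Matrix.linearIndependent_rows_iff_isUnit.2 ((Matrix.isUnit_iff_isUnit_det _).2 hdet.isUnit)
  exact h2.of_comp (LinearMap.funLeft ℂ ℂ f)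

lemma li_of_det' (s : Finset (Fin 5)) (v : Fin 5 → Fin 5 → ℂ) (a : Fin 4 → Fin 5)
    (ha : ∀ i, a i ∈ s)
    (hbij : Function.Bijective (fun i : Fin 4 => (⟨a i, ha i⟩ : {x // x ∈ s})))
    (f : Fin 4 → Fin 5)
    (hdet : (Matrix.of fun i k => v (a i) (f k)).det ≠ 0) :
    LinearIndependent ℂ (fun j : s => v j) :=
  li_of_det _ (Equiv.ofBijective _ hbij) f hdet
def Rt2 : Matrix (Fin 5) (Fin 5) ℂ := !![0, -Complex.I, -1, 1, Complex.I; Complex.I, 0, -Complex.I, -1, 1; 1, Complex.I, 0, -Complex.I, -1; -1, 1, Complex.I, 0, -Complex.I; -Complex.I, -1, 1, Complex.I, 0]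
lemma hE2 : ∀ a i : Fin 5, permSMul (c ^ ((a : Fin 5) : ℕ)) R₂ i = Rt2 a i := by
  intro a i; fin_cases a <;> fin_cases i <;> rfl
def Rt3 : Matrix (Fin 5) (Fin 5) ℂ := !![0, Complex.I, -1, 1, -Complex.I; -Complex.I, 0, Complex.I, -1, 1; 1, -Complex.I, 0, Complex.I, -1; -1, 1, -Complex.I, 0, Complex.I; Complex.I, -1, 1, -Complex.I, 0]
lemma hE3 : ∀ a i : Fin 5, permSMul (c ^ ((a : Fin 5) : ℕ)) R₃ i = Rt3 a i := by
  intro a i; fin_cases a <;> fin_cases i <;> rfl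

lemma E2_0 : ∀ i : Fin 5, permSMul (1) R₂ i = Rt2 0 i := by
  intro i; fin_cases i <;> rfl
lemma E2_1 : ∀ i : Fin 5, permSMul (c) R₂ i = Rt2 1 i := by
  intro i; fin_cases i <;> rfl
lemma E2_2 : ∀ i : Fin 5, permSMul (c ^ 2) R₂ i = Rt2 2 i := by
  intro i; fin_cases i <;> rfl
lemma E2_3 : ∀ i : Fin 5, permSMul (c ^ 3) R₂ i = Rt2 3 i := by
  intro i; fin_cases i <;> rfl
lemma E2_4 : ∀ i : Fin 5, permSMul (c ^ 4) R₂ i = Rt2 4 i := by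
  intro i; fin_cases i <;> rfl
lemma E3_0 : ∀ i : Fin 5, permSMul (1) R₃ i = Rt3 0 i := by
  intro i; fin_cases i <;> rfl
lemma E3_1 : ∀ i : Fin 5, permSMul (c) R₃ i = Rt3 1 i := by
  intro i; fin_cases i <;> rfl
lemma E3_2 : ∀ i : Fin 5, permSMul (c ^ 2) R₃ i = Rt3 2 i := by
  intro i; fin_cases i <;> rfl
lemma E3_3 : ∀ i : Fin 5, permSMul (c ^ 3) R₃ i = Rt3 3 i := by
  intro i; fin_cases i <;> rfl
lemma E3_4 : ∀ i : Fin 5, permSMul (c ^ 4) R₃ i = Rt3 4 i := by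
  intro i; fin_cases i <;> rfl

lemma partA2 : ∀ s : Finset (Fin 5), s.card = 4 →
    LinearIndependent ℂ (fun j : s => permSMul (c ^ ((j : Fin 5) : ℕ)) R₂) := by
  intro s hs
  have h5 : s = {0,1,2,3} ∨ s = {0,1,2,4} ∨ s = {0,1,3,4} ∨ s = {0,2,3,4} ∨ s = {1,2,3,4} := by
    revert hs; revert s; decide
  rcases h5 with h | h | h | h | h <;> subst h
  · refine li_of_det' _ (fun x : Fin 5 => permSMul (c ^ ((x : Fin 5) : ℕ)) R₂) ![0,1,2,3]
      (by decide) (by decide) ![0,1,2,3] ?_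
    have hM : (Matrix.of fun i k => (fun x : Fin 5 => permSMul (c ^ ((x : Fin 5) : ℕ)) R₂) (![0,1,2,3] i) ((![0,1,2,3] : Fin 4 → Fin 5) k)) =
        !![0, -Complex.I, -1, 1; Complex.I, 0, -Complex.I, -1; 1, Complex.I, 0, -Complex.I; -1, 1, Complex.I, 0] := by
      funext i k; fin_cases i <;> fin_cases k <;> rfl
    rw [hM]
    simp [Matrix.det_succ_row_zero, Fin.sum_univ_succ]
    norm_num [sa1, sa2, cs2, Complex.ext_iff, sa3, Matrix.cons_val_two, Matrix.cons_val_three, Matrix.vecHead, Matrix.vecTail]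
  · refine li_of_det' _ (fun x : Fin 5 => permSMul (c ^ ((x : Fin 5) : ℕ)) R₂) ![0,1,2,4]
      (by decide) (by decide) ![0,1,2,3] ?_
    have hM : (Matrix.of fun i k => (fun x : Fin 5 => permSMul (c ^ ((x : Fin 5) : ℕ)) R₂) (![0,1,2,4] i) ((![0,1,2,3] : Fin 4 → Fin 5) k)) =
        !![0, -Complex.I, -1, 1; Complex.I, 0, -Complex.I, -1; 1, Complex.I, 0, -Complex.I; -Complex.I, -1, 1, Complex.I] := by
      funext i k; fin_cases i <;> fin_cases k <;> rfl
    rw [hM]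
    simp [Matrix.det_succ_row_zero, Fin.sum_univ_succ]
    norm_num [sa1, sa2, cs2, Complex.ext_iff, sa3, Matrix.cons_val_two, Matrix.cons_val_three, Matrix.vecHead, Matrix.vecTail]
  · refine li_of_det' _ (fun x : Fin 5 => permSMul (c ^ ((x : Fin 5) : ℕ)) R₂) ![0,1,3,4]
      (by decide) (by decide) ![0,1,2,3] ?_
    have hM : (Matrix.of fun i k => (fun x : Fin 5 => permSMul (c ^ ((x : Fin 5) : ℕ)) R₂) (![0,1,3,4] i) ((![0,1,2,3] : Fin 4 → Fin 5) k)) =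
        !![0, -Complex.I, -1, 1; Complex.I, 0, -Complex.I, -1; -1, 1, Complex.I, 0; -Complex.I, -1, 1, Complex.I] := by
      funext i k; fin_cases i <;> fin_cases k <;> rfl
    rw [hM]
    simp [Matrix.det_succ_row_zero, Fin.sum_univ_succ]
    norm_num [sa1, sa2, cs2, Complex.ext_iff, sa3, Matrix.cons_val_two, Matrix.cons_val_three, Matrix.vecHead, Matrix.vecTail]
  · refine li_of_det' _ (fun x : Fin 5 => permSMul (c ^ ((x : Fin 5) : ℕ)) R₂) ![0,2,3,4]
      (by decide) (by decide) ![0,1,2,3] ?_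
    have hM : (Matrix.of fun i k => (fun x : Fin 5 => permSMul (c ^ ((x : Fin 5) : ℕ)) R₂) (![0,2,3,4] i) ((![0,1,2,3] : Fin 4 → Fin 5) k)) =
        !![0, -Complex.I, -1, 1; 1, Complex.I, 0, -Complex.I; -1, 1, Complex.I, 0; -Complex.I, -1, 1, Complex.I] := by
      funext i k; fin_cases i <;> fin_cases k <;> rfl
    rw [hM]
    simp [Matrix.det_succ_row_zero, Fin.sum_univ_succ]
    norm_num [sa1, sa2, cs2, Complex.ext_iff, sa3, Matrix.cons_val_two, Matrix.cons_val_three, Matrix.vecHead, Matrix.vecTail]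
  · refine li_of_det' _ (fun x : Fin 5 => permSMul (c ^ ((x : Fin 5) : ℕ)) R₂) ![1,2,3,4]
      (by decide) (by decide) ![0,1,2,3] ?_
    have hM : (Matrix.of fun i k => (fun x : Fin 5 => permSMul (c ^ ((x : Fin 5) : ℕ)) R₂) (![1,2,3,4] i) ((![0,1,2,3] : Fin 4 → Fin 5) k)) =
        !![Complex.I, 0, -Complex.I, -1; 1, Complex.I, 0, -Complex.I; -1, 1, Complex.I, 0; -Complex.I, -1, 1, Complex.I] := by
      funext i k; fin_cases i <;> fin_cases k <;> rfl
    rw [hM]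
    simp [Matrix.det_succ_row_zero, Fin.sum_univ_succ]
    norm_num [sa1, sa2, cs2, Complex.ext_iff, sa3, Matrix.cons_val_two, Matrix.cons_val_three, Matrix.vecHead, Matrix.vecTail]

lemma partA3 : ∀ s : Finset (Fin 5), s.card = 4 →
    LinearIndependent ℂ (fun j : s => permSMul (c ^ ((j : Fin 5) : ℕ)) R₃) := by
  intro s hs
  have h5 : s = {0,1,2,3} ∨ s = {0,1,2,4} ∨ s = {0,1,3,4} ∨ s = {0,2,3,4} ∨ s = {1,2,3,4} := by
    revert hs; revert s; decide
  rcases h5 with h | h | h | h | h <;> subst h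
  · refine li_of_det' _ (fun x : Fin 5 => permSMul (c ^ ((x : Fin 5) : ℕ)) R₃) ![0,1,2,3]
      (by decide) (by decide) ![0,1,2,3] ?_
    have hM : (Matrix.of fun i k => (fun x : Fin 5 => permSMul (c ^ ((x : Fin 5) : ℕ)) R₃) (![0,1,2,3] i) ((![0,1,2,3] : Fin 4 → Fin 5) k)) =
        !![0, Complex.I, -1, 1; -Complex.I, 0, Complex.I, -1; 1, -Complex.I, 0, Complex.I; -1, 1, -Complex.I, 0] := by
      funext i k; fin_cases i <;> fin_cases k <;> rfl
    rw [hM]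
    simp [Matrix.det_succ_row_zero, Fin.sum_univ_succ]
    norm_num [sa1, sa2, cs2, Complex.ext_iff, sa3, Matrix.cons_val_two, Matrix.cons_val_three, Matrix.vecHead, Matrix.vecTail]
  · refine li_of_det' _ (fun x : Fin 5 => permSMul (c ^ ((x : Fin 5) : ℕ)) R₃) ![0,1,2,4]
      (by decide) (by decide) ![0,1,2,3] ?_
    have hM : (Matrix.of fun i k => (fun x : Fin 5 => permSMul (c ^ ((x : Fin 5) : ℕ)) R₃) (![0,1,2,4] i) ((![0,1,2,3] : Fin 4 → Fin 5) k)) =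
        !![0, Complex.I, -1, 1; -Complex.I, 0, Complex.I, -1; 1, -Complex.I, 0, Complex.I; Complex.I, -1, 1, -Complex.I] := by
      funext i k; fin_cases i <;> fin_cases k <;> rfl
    rw [hM]
    simp [Matrix.det_succ_row_zero, Fin.sum_univ_succ]
    norm_num [sa1, sa2, cs2, Complex.ext_iff, sa3, Matrix.cons_val_two, Matrix.cons_val_three, Matrix.vecHead, Matrix.vecTail]
  · refine li_of_det' _ (fun x : Fin 5 => permSMul (c ^ ((x : Fin 5) : ℕ)) R₃) ![0,1,3,4]
      (by decide) (by decide) ![0,1,2,3] ?_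
    have hM : (Matrix.of fun i k => (fun x : Fin 5 => permSMul (c ^ ((x : Fin 5) : ℕ)) R₃) (![0,1,3,4] i) ((![0,1,2,3] : Fin 4 → Fin 5) k)) =
        !![0, Complex.I, -1, 1; -Complex.I, 0, Complex.I, -1; -1, 1, -Complex.I, 0; Complex.I, -1, 1, -Complex.I] := by
      funext i k; fin_cases i <;> fin_cases k <;> rfl
    rw [hM]
    simp [Matrix.det_succ_row_zero, Fin.sum_univ_succ]
    norm_num [sa1, sa2, cs2, Complex.ext_iff, sa3, Matrix.cons_val_two, Matrix.cons_val_three, Matrix.vecHead, Matrix.vecTail]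
  · refine li_of_det' _ (fun x : Fin 5 => permSMul (c ^ ((x : Fin 5) : ℕ)) R₃) ![0,2,3,4]
      (by decide) (by decide) ![0,1,2,3] ?_
    have hM : (Matrix.of fun i k => (fun x : Fin 5 => permSMul (c ^ ((x : Fin 5) : ℕ)) R₃) (![0,2,3,4] i) ((![0,1,2,3] : Fin 4 → Fin 5) k)) =
        !![0, Complex.I, -1, 1; 1, -Complex.I, 0, Complex.I; -1, 1, -Complex.I, 0; Complex.I, -1, 1, -Complex.I] := by
      funext i k; fin_cases i <;> fin_cases k <;> rfl
    rw [hM]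
    simp [Matrix.det_succ_row_zero, Fin.sum_univ_succ]
    norm_num [sa1, sa2, cs2, Complex.ext_iff, sa3, Matrix.cons_val_two, Matrix.cons_val_three, Matrix.vecHead, Matrix.vecTail]
  · refine li_of_det' _ (fun x : Fin 5 => permSMul (c ^ ((x : Fin 5) : ℕ)) R₃) ![1,2,3,4]
      (by decide) (by decide) ![0,1,2,3] ?_
    have hM : (Matrix.of fun i k => (fun x : Fin 5 => permSMul (c ^ ((x : Fin 5) : ℕ)) R₃) (![1,2,3,4] i) ((![0,1,2,3] : Fin 4 → Fin 5) k)) =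
        !![-Complex.I, 0, Complex.I, -1; 1, -Complex.I, 0, Complex.I; -1, 1, -Complex.I, 0; Complex.I, -1, 1, -Complex.I] := by
      funext i k; fin_cases i <;> fin_cases k <;> rfl
    rw [hM]
    simp [Matrix.det_succ_row_zero, Fin.sum_univ_succ]
    norm_num [sa1, sa2, cs2, Complex.ext_iff, sa3, Matrix.cons_val_two, Matrix.cons_val_three, Matrix.vecHead, Matrix.vecTail]

lemma partB2 : ∀ j j' : Fin 5, j ≠ j' →
    ¬ ((Submodule.span ℂ
          {permSMul (c ^ (j : ℕ)) R₂, permSMul (c ^ (j' : ℕ)) R₂} : Set (Fin 5 → ℂ)) ⊆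
        {v : Fin 5 → ℂ | (∑ i, (v i) ^ 2) = 0}) := by
  intro j j' hne hsub
  have hmem : permSMul (c ^ (j : ℕ)) R₂ + permSMul (c ^ (j' : ℕ)) R₂ ∈
      (Submodule.span ℂ ({permSMul (c ^ (j : ℕ)) R₂, permSMul (c ^ (j' : ℕ)) R₂} : Set (Fin 5 → ℂ))) :=
    Submodule.add_mem _ (Submodule.subset_span (by simp)) (Submodule.subset_span (by simp))
  have h := hsub hmem
  simp only [Set.mem_setOf_eq, Pi.add_apply] at h
  revert h
  fin_cases j <;> fin_cases j' <;> simp_all <;>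
    norm_num [Fin.sum_univ_five, E2_0, E2_1, E2_2, E2_3, E2_4, Rt2, add_sq, Complex.I_sq, neg_sq, Complex.ext_iff, Matrix.cons_val_two, Matrix.cons_val_three, Matrix.cons_val_four, Matrix.vecHead, Matrix.vecTail]

lemma partB3 : ∀ j j' : Fin 5, j ≠ j' →
    ¬ ((Submodule.span ℂ
          {permSMul (c ^ (j : ℕ)) R₃, permSMul (c ^ (j' : ℕ)) R₃} : Set (Fin 5 → ℂ)) ⊆
        {v : Fin 5 → ℂ | (∑ i, (v i) ^ 2) = 0}) := by
  intro j j' hne hsub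
  have hmem : permSMul (c ^ (j : ℕ)) R₃ + permSMul (c ^ (j' : ℕ)) R₃ ∈
      (Submodule.span ℂ ({permSMul (c ^ (j : ℕ)) R₃, permSMul (c ^ (j' : ℕ)) R₃} : Set (Fin 5 → ℂ))) :=
    Submodule.add_mem _ (Submodule.subset_span (by simp)) (Submodule.subset_span (by simp))
  have h := hsub hmem
  simp only [Set.mem_setOf_eq, Pi.add_apply] at h
  revert h
  fin_cases j <;> fin_cases j' <;> simp_all <;>
    norm_num [Fin.sum_univ_five, E3_0, E3_1, E3_2, E3_3, E3_4, Rt3, add_sq, Complex.I_sq, neg_sq, Complex.ext_iff, Matrix.cons_val_two, Matrix.cons_val_three, Matrix.cons_val_four, Matrix.vecHead, Matrix.vecTail]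

theorem stmt11 :
    ∀ Rm ∈ ({R₂, R₃} : Set (Fin 5 → ℂ)),
      (∀ s : Finset (Fin 5), s.card = 4 →
        LinearIndependent ℂ (fun j : s => permSMul (c ^ ((j : Fin 5) : ℕ)) Rm)) ∧
      (∀ j j' : Fin 5, j ≠ j' →
        ¬ ((Submodule.span ℂ
              {permSMul (c ^ (j : ℕ)) Rm, permSMul (c ^ (j' : ℕ)) Rm} : Set (Fin 5 → ℂ)) ⊆
            {v : Fin 5 → ℂ | (∑ i, (v i) ^ 2) = 0})) := by
  rintro Rm (rfl | rfl)
  · exact ⟨partA2, partB2⟩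
  · exact ⟨partA3, partB3⟩
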